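/- The set Ω̃ = {(x,y) ∈ ℝ² : 0 ≤ x ≤ 1, y ≥ 0} is positively invariant for the system: every solution (x(t), y(t)) with initial condition (x(0), y(0)) ∈ Ω̃ satisfies (x(t), y(t)) ∈ Ω̃ for all t ≥ 0 in its interval of definition. -/

import Mathlib

open Set intervalIntegral MeasureTheory

/-- If `f' = a·f + b` on `[0,t]` with `a` continuous, `b ≥ 0`, and `f 0 ≥ 0`,
then `f t ≥ 0`. -/
lemma grow_nonneg (t : ℝ) (ht : 0 ≤ t) (f a b : ℝ → ℝ)
    (ha : ContinuousOn a (Icc 0 t))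
    (hb : ∀ s ∈ Icc 0 t, 0 ≤ b s)
    (hf : ∀ s ∈ Icc 0 t, HasDerivWithinAt f (a s * f s + b s) (Icc 0 t) s)
    (h0 : 0 ≤ f 0) : 0 ≤ f t := by
  rcases eq_or_lt_of_le ht with rfl | htpos
  · exact h0
  set G : ℝ → ℝ := fun s => ∫ r in (0:ℝ)..s, a r with hGdef
  have hmeas : AEStronglyMeasurable a (volume.restrict (Icc 0 t)) :=
    ha.aestronglyMeasurable measurableSet_Icc
  have hint : ∀ s ∈ Icc (0:ℝ) t, IntervalIntegrable a volume 0 s := by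
    intro s hs
    apply ContinuousOn.intervalIntegrable
    apply ha.mono
    rw [uIcc_of_le hs.1]
    exact Icc_subset_Icc le_rfl hs.2
  have hG : ∀ s ∈ Icc (0:ℝ) t, HasDerivWithinAt G (a s) (Icc 0 t) s := by
    intro s hs
    haveI : Fact (s ∈ Icc (0:ℝ) t) := ⟨hs⟩
    exact integral_hasDerivWithinAt_right (hint s hs)
      ⟨Icc 0 t, self_mem_nhdsWithin, hmeas⟩ ((ha s hs).mono Subset.rfl)
  set F : ℝ → ℝ := fun s => f s * Real.exp (-(G s)) with hFdef
  have hF : ∀ s ∈ Icc (0:ℝ) t,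
      HasDerivWithinAt F (b s * Real.exp (-(G s))) (Icc 0 t) s := by
    intro s hs
    have h1 : HasDerivWithinAt (fun u => Real.exp (-(G u)))
        (Real.exp (-(G s)) * (-(a s))) (Icc 0 t) s :=
      (((hG s hs).neg).exp)
    have := (hf s hs).mul h1
    refine this.congr_deriv ?_
    ring
  have hcont : ContinuousOn F (Icc 0 t) := fun s hs => (hF s hs).continuousWithinAt
  have hmono : MonotoneOn F (Icc 0 t) := by
    apply monotoneOn_of_deriv_nonneg (convex_Icc 0 t) hcont
    · intro s hs
      rw [interior_Icc] at hs
      exact ((hF s (Ioo_subset_Icc_self hs)).hasDerivAt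
        (Icc_mem_nhds hs.1 hs.2)).differentiableAt.differentiableWithinAt
    · intro s hs
      rw [interior_Icc] at hs
      have := ((hF s (Ioo_subset_Icc_self hs)).hasDerivAt (Icc_mem_nhds hs.1 hs.2)).deriv
      rw [this]
      exact mul_nonneg (hb s (Ioo_subset_Icc_self hs)) (Real.exp_pos _).le
  have h01 : F 0 ≤ F t := hmono (left_mem_Icc.2 ht) (right_mem_Icc.2 ht) ht
  have hF0 : F 0 = f 0 := by
    simp [hFdef, hGdef, intervalIntegral.integral_same]
  have h2 : 0 ≤ F t := le_trans (hF0.symm ▸ h0) h01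
  have h3 : F t = f t * Real.exp (-(G t)) := rfl
  rw [h3] at h2
  have hexp : 0 < Real.exp (-(G t)) := Real.exp_pos _
  nlinarith [h2, hexp]

/-- The region `Ω̃ = {(x,y) : 0 ≤ x ≤ 1, 0 ≤ y}` is positively invariant for
the system `ẋ = x(C+x)(1−x−Ay)`, `ẏ = B·y·(C+x−y)`: any solution starting in
`Ω̃` at time `0` stays in `Ω̃` for all `t ≥ 0` in its interval of definition. -/
theorem stmt_7 (A B C : ℝ) (hA : 0 < A) (hB : 0 < B) (hC : 0 < C)
    (I : Set ℝ) (hI : I.OrdConnected) (h0 : (0 : ℝ) ∈ I) (x y : ℝ → ℝ)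
    (hx : ∀ t ∈ I, HasDerivAt x ((x t) * (C + x t) * (1 - x t - A * y t)) t)
    (hy : ∀ t ∈ I, HasDerivAt y (B * (y t) * (C + x t - y t)) t)
    (hx0 : 0 ≤ x 0) (hx1 : x 0 ≤ 1) (hy0 : 0 ≤ y 0) :
    ∀ t ∈ I, 0 ≤ t → 0 ≤ x t ∧ x t ≤ 1 ∧ 0 ≤ y t := by
  have hcx : ∀ s ∈ I, ContinuousAt x s := fun s hs => (hx s hs).continuousAt
  have hcy : ∀ s ∈ I, ContinuousAt y s := fun s hs => (hy s hs).continuousAt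
  -- x ≥ 0 for all nonneg times in I
  have hxnn : ∀ t ∈ I, 0 ≤ t → 0 ≤ x t := by
    intro t htI ht
    have hsub : Icc (0:ℝ) t ⊆ I := hI.out h0 htI
    apply grow_nonneg t ht x (fun s => (C + x s) * (1 - x s - A * y s)) (fun _ => 0)
    · intro s hs
      exact (((continuousAt_const.add (hcx s (hsub hs))).mul
        ((continuousAt_const.sub (hcx s (hsub hs))).sub
          (continuousAt_const.mul (hcy s (hsub hs))))).continuousWithinAt)
    · intro s _; exact le_rfl
    · intro s hs
      have := (hx s (hsub hs)).hasDerivWithinAt (s := Icc 0 t)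
      refine this.congr_deriv ?_
      ring
    · exact hx0
  -- y ≥ 0 for all nonneg times in I
  have hynn : ∀ t ∈ I, 0 ≤ t → 0 ≤ y t := by
    intro t htI ht
    have hsub : Icc (0:ℝ) t ⊆ I := hI.out h0 htI
    apply grow_nonneg t ht y (fun s => B * (C + x s - y s)) (fun _ => 0)
    · intro s hs
      exact ((continuousAt_const.mul
        ((continuousAt_const.add (hcx s (hsub hs))).sub (hcy s (hsub hs)))).continuousWithinAt)
    · intro s _; exact le_rfl
    · intro s hs
      have := (hy s (hsub hs)).hasDerivWithinAt (s := Icc 0 t)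
      refine this.congr_deriv ?_
      ring
    · exact hy0
  intro t htI ht
  refine ⟨hxnn t htI ht, ?_, hynn t htI ht⟩
  -- x ≤ 1 via f = 1 - x
  have hsub : Icc (0:ℝ) t ⊆ I := hI.out h0 htI
  have key : 0 ≤ 1 - x t := by
    apply grow_nonneg t ht (fun s => 1 - x s) (fun s => -(x s * (C + x s)))
      (fun s => A * (x s * (C + x s) * y s))
    · intro s hs
      exact ((hcx s (hsub hs)).mul
        (continuousAt_const.add (hcx s (hsub hs)))).neg.continuousWithinAt
    · intro s hs
      have hxs : 0 ≤ x s := hxnn s (hsub hs) hs.1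
      have hys : 0 ≤ y s := hynn s (hsub hs) hs.1
      have : 0 ≤ C + x s := by linarith
      positivity
    · intro s hs
      have := ((hx s (hsub hs)).const_sub 1).hasDerivWithinAt (s := Icc 0 t)
      refine this.congr_deriv ?_
      ring
    · linarith
  linarith
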